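/- Let T>0, H∈(0,1), p≥1 and m∈ℕ, m≥1, and define f_T(a) = (∫₀^T e^{−a v^{2H}} dv)^p / (∫₀^{T/m} e^{−a v^{2H/p}} dv) for a≥0. Then f_T is continuous on [0,∞), f_T(0) = m·T^{p−1}, and lim_{a→∞} f_T(a) = Γ(1/(2H))^p / (p·(2H)^{p−1}·Γ(p/(2H))), where Γ denotes the Gamma function. -/

import Mathlib

open MeasureTheory Filter Topology

noncomputable section

lemma aux_integrable {c : ℝ} (hc : 0 < c) :
    IntegrableOn (fun x : ℝ => Real.exp (-x ^ c)) (Set.Ioi 0) := by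
  rw [← MeasureTheory.integrableOn_Ioi_comp_rpow_iff' (fun x : ℝ => Real.exp (-x ^ c))
    (p := 1 / c) (one_div_ne_zero hc.ne')]
  refine (Real.GammaIntegral_convergent (s := 1 / c) (by positivity)).congr_fun
    (fun x hx => ?_) measurableSet_Ioi
  have hx0 : (0:ℝ) < x := hx
  rw [smul_eq_mul, ← Real.rpow_mul hx0.le, one_div_mul_cancel hc.ne', Real.rpow_one, mul_comm]

lemma aux_key {c b : ℝ} (hc : 0 < c) (hb : 0 < b) :
    Tendsto (fun a : ℝ => a ^ (1 / c) * ∫ v in (0:ℝ)..b, Real.exp (-a * v ^ c)) atTop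
      (𝓝 (Real.Gamma (1 / c + 1))) := by
  have hlim : Tendsto (fun a : ℝ => b * a ^ (1 / c)) atTop atTop :=
    (tendsto_rpow_atTop (by positivity)).const_mul_atTop hb
  have h := MeasureTheory.intervalIntegral_tendsto_integral_Ioi 0 (aux_integrable hc) hlim
  rw [integral_exp_neg_rpow hc] at h
  apply h.congr'
  filter_upwards [eventually_gt_atTop (0:ℝ)] with a ha
  have hac : (0:ℝ) < a ^ (1 / c) := Real.rpow_pos_of_pos ha _
  calc ∫ u in (0:ℝ)..(b * a ^ (1 / c)), Real.exp (-u ^ c)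
      = ∫ u in (0:ℝ) * a ^ (1 / c)..(b * a ^ (1 / c)), Real.exp (-u ^ c) := by rw [zero_mul]
    _ = a ^ (1 / c) • ∫ v in (0:ℝ)..b, Real.exp (-(v * a ^ (1 / c)) ^ c) :=
        (intervalIntegral.smul_integral_comp_mul_right (a := 0) (b := b)
          (fun u => Real.exp (-u ^ c)) (a ^ (1 / c))).symm
    _ = a ^ (1 / c) * ∫ v in (0:ℝ)..b, Real.exp (-a * v ^ c) := by
        rw [smul_eq_mul]
        congr 1
        apply intervalIntegral.integral_congr
        intro v hv
        rw [Set.uIcc_of_le hb.le] at hv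
        show Real.exp (-(v * a ^ (1 / c)) ^ c) = Real.exp (-a * v ^ c)
        rw [Real.mul_rpow hv.1 hac.le, ← Real.rpow_mul ha.le, one_div_mul_cancel hc.ne',
          Real.rpow_one, mul_comm (v ^ c) a, neg_mul]

theorem stmt10
    (T : ℝ) (hT : 0 < T) (H : ℝ) (hH : H ∈ Set.Ioo (0 : ℝ) 1)
    (p : ℝ) (hp : 1 ≤ p) (m : ℕ) (hm : 1 ≤ m)
    (f : ℝ → ℝ)
    (hf : ∀ a : ℝ, f a =
      (∫ v in (0 : ℝ)..T, Real.exp (-a * v ^ (2 * H))) ^ p /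
        ∫ v in (0 : ℝ)..(T / m), Real.exp (-a * v ^ (2 * H / p))) :
    ContinuousOn f (Set.Ici (0 : ℝ)) ∧
    f 0 = m * T ^ (p - 1) ∧
    Tendsto f atTop
      (𝓝 (Real.Gamma (1 / (2 * H)) ^ p /
        (p * (2 * H) ^ (p - 1) * Real.Gamma (p / (2 * H))))) := by
  obtain ⟨hH0, hH1⟩ := hH
  have hp0 : (0:ℝ) < p := lt_of_lt_of_le one_pos hp
  have h2H : (0:ℝ) < 2 * H := by linarith
  have h2Hp : (0:ℝ) < 2 * H / p := by positivity
  have hm0 : (0:ℝ) < (m:ℝ) := by exact_mod_cast hm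
  have hTm : (0:ℝ) < T / m := by positivity
  obtain rfl : f = fun a : ℝ =>
      (∫ v in (0 : ℝ)..T, Real.exp (-a * v ^ (2 * H))) ^ p /
        ∫ v in (0 : ℝ)..(T / m), Real.exp (-a * v ^ (2 * H / p)) := funext hf
  set G : ℝ → ℝ := fun a => ∫ v in (0:ℝ)..T, Real.exp (-a * v ^ (2 * H)) with hGdef
  set K : ℝ → ℝ := fun a => ∫ v in (0:ℝ)..(T / m), Real.exp (-a * v ^ (2 * H / p)) with hKdef
  have contG : Continuous G := by
    apply intervalIntegral.continuous_parametric_intervalIntegral_of_continuous'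
    exact (continuous_fst.neg.mul (continuous_snd.rpow_const (fun x => Or.inr h2H.le))).rexp
  have contK : Continuous K := by
    apply intervalIntegral.continuous_parametric_intervalIntegral_of_continuous'
    exact (continuous_fst.neg.mul (continuous_snd.rpow_const (fun x => Or.inr h2Hp.le))).rexp
  have hKpos : ∀ a : ℝ, 0 < K a := by
    intro a
    refine intervalIntegral.intervalIntegral_pos_of_pos ?_ (fun x => Real.exp_pos _) hTm
    exact ((continuous_const.mul
      (continuous_id.rpow_const (fun x => Or.inr h2Hp.le))).rexp).intervalIntegrable 0 (T / m)
  refine ⟨?_, ?_, ?_⟩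
  · refine Continuous.continuousOn ?_
    exact (contG.rpow_const (fun a => Or.inr hp0.le)).div contK (fun a => (hKpos a).ne')
  · have hG0 : G 0 = T := by
      simp [hGdef]
    have hK0 : K 0 = T / m := by
      simp [hKdef]
    show G 0 ^ p / K 0 = _
    simp only [hG0, hK0]
    have hTp : T ^ (p - 1) = T ^ p / T := by
      rw [Real.rpow_sub hT, Real.rpow_one]
    rw [hTp]
    field_simp
  · have num := aux_key h2H hT
    have den := aux_key h2Hp hTm
    have hexp : 1 / (2 * H / p) = p / (2 * H) := by
      rw [one_div_div]
    rw [hexp] at den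
    have numP : Tendsto (fun a : ℝ => (a ^ (1 / (2 * H)) * G a) ^ p) atTop
        (𝓝 ((Real.Gamma (1 / (2 * H) + 1)) ^ p)) :=
      num.rpow_const (Or.inr hp0.le)
    have hdenpos : (0:ℝ) < Real.Gamma (p / (2 * H) + 1) :=
      Real.Gamma_pos_of_pos (by positivity)
    have main := numP.div den hdenpos.ne'
    have hval : Real.Gamma (1 / (2 * H) + 1) ^ p / Real.Gamma (p / (2 * H) + 1)
        = Real.Gamma (1 / (2 * H)) ^ p /
          (p * (2 * H) ^ (p - 1) * Real.Gamma (p / (2 * H))) := by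
      rw [Real.Gamma_add_one (by positivity : (0:ℝ) < 1 / (2 * H)).ne',
        Real.Gamma_add_one (by positivity : (0:ℝ) < p / (2 * H)).ne',
        Real.mul_rpow (by positivity)
          (Real.Gamma_pos_of_pos (by positivity : (0:ℝ) < 1 / (2 * H))).le,
        Real.rpow_sub h2H, Real.rpow_one, one_div, Real.inv_rpow h2H.le]
      have h1 : ((2 * H):ℝ) ^ p ≠ 0 := by positivity
      have h2 : Real.Gamma (p / (2 * H)) ≠ 0 :=
        (Real.Gamma_pos_of_pos (by positivity : (0:ℝ) < p / (2 * H))).ne'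
      field_simp
    rw [← hval]
    apply main.congr'
    filter_upwards [eventually_gt_atTop (0:ℝ)] with a ha
    show (a ^ (1 / (2 * H)) * G a) ^ p / (a ^ (p / (2 * H)) * K a) = (G a) ^ p / K a
    have hGnn : 0 ≤ G a := by
      apply intervalIntegral.integral_nonneg hT.le
      intro v _
      exact (Real.exp_pos _).le
    have hapos : (0:ℝ) < a ^ (p / (2 * H)) := Real.rpow_pos_of_pos ha _
    have key : (a ^ (1 / (2 * H)) * G a) ^ p = a ^ (p / (2 * H)) * (G a) ^ p := by
      rw [Real.mul_rpow (Real.rpow_pos_of_pos ha _).le hGnn, ← Real.rpow_mul ha.le,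
        one_div_mul_eq_div]
    rw [key, mul_div_mul_left _ _ hapos.ne']
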